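/- Let a₁, a₂, b₁, b₂ ∈ ℝ³ be unit vectors and R a rotation (element of SO(3)). Then (a₁+a₂)·b₁ + (a₁ − R a₂)·b₂ ≤ 4, and there is a choice with a₁ = a₂ = b₁ = b₂ and R a₂ = −a₂ achieving the value 4. -/

import Mathlib

open RealInnerProductSpace Real

noncomputable def act (M : Matrix (Fin 3) (Fin 3) ℝ) (x : EuclideanSpace ℝ (Fin 3)) :
    EuclideanSpace ℝ (Fin 3) := Matrix.toEuclideanLin M x

lemma act_norm (M : Matrix (Fin 3) (Fin 3) ℝ) (h : star M * M = 1)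
    (x : EuclideanSpace ℝ (Fin 3)) : ‖act M x‖ = ‖x‖ := by
  have hM : M.conjTranspose * M = 1 := h
  have key : act M.conjTranspose (act M x) = x := by
    simp only [act, Matrix.toEuclideanLin_apply, WithLp.ofLp_toLp,
      Matrix.mulVec_mulVec]
    have : M.conjTranspose.mulVec (M.mulVec ((WithLp.equiv 2 (Fin 3 → ℝ)) x)) = x := by
      rw [Matrix.mulVec_mulVec, hM, Matrix.one_mulVec]; rfl
    simpa using congrArg (WithLp.toLp 2) this
  have hinner : ⟪act M x, act M x⟫ = ⟪x, x⟫ := by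
    calc ⟪act M x, act M x⟫ = ⟪x, act M.conjTranspose (act M x)⟫ := by
          simp only [act, Matrix.toEuclideanLin_conjTranspose_eq_adjoint,
            LinearMap.adjoint_inner_right]
      _ = ⟪x, x⟫ := by rw [key]
  have := congrArg Real.sqrt hinner
  rwa [real_inner_self_eq_norm_sq, real_inner_self_eq_norm_sq,
    Real.sqrt_sq (norm_nonneg _), Real.sqrt_sq (norm_nonneg _)] at this

theorem stmt_7 :
    (∀ (a₁ a₂ b₁ b₂ : EuclideanSpace ℝ (Fin 3)),
      ‖a₁‖ = 1 → ‖a₂‖ = 1 → ‖b₁‖ = 1 → ‖b₂‖ = 1 →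
      ∀ R : Matrix.specialOrthogonalGroup (Fin 3) ℝ,
        ⟪a₁ + a₂, b₁⟫ + ⟪a₁ - act (R : Matrix (Fin 3) (Fin 3) ℝ) a₂, b₂⟫ ≤ 4) ∧
    (∃ (a₁ a₂ b₁ b₂ : EuclideanSpace ℝ (Fin 3))
       (R : Matrix.specialOrthogonalGroup (Fin 3) ℝ),
      ‖a₁‖ = 1 ∧ a₁ = a₂ ∧ a₂ = b₁ ∧ b₁ = b₂ ∧
      act (R : Matrix (Fin 3) (Fin 3) ℝ) a₂ = -a₂ ∧
      ⟪a₁ + a₂, b₁⟫ + ⟪a₁ - act (R : Matrix (Fin 3) (Fin 3) ℝ) a₂, b₂⟫ = 4) := by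
  constructor
  · intro a₁ a₂ b₁ b₂ ha₁ ha₂ hb₁ hb₂ R
    have hR : ‖act (R : Matrix (Fin 3) (Fin 3) ℝ) a₂‖ = 1 := by
      rw [act_norm _ R.2.1.1 a₂, ha₂]
    have h1 : ⟪a₁ + a₂, b₁⟫ ≤ 2 := by
      calc ⟪a₁ + a₂, b₁⟫ ≤ ‖a₁ + a₂‖ * ‖b₁‖ := real_inner_le_norm _ _
        _ ≤ (‖a₁‖ + ‖a₂‖) * ‖b₁‖ := by
            apply mul_le_mul_of_nonneg_right (norm_add_le _ _) (norm_nonneg _)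
        _ = 2 := by rw [ha₁, ha₂, hb₁]; norm_num
    have h2 : ⟪a₁ - act (R : Matrix (Fin 3) (Fin 3) ℝ) a₂, b₂⟫ ≤ 2 := by
      calc ⟪a₁ - act (R : Matrix (Fin 3) (Fin 3) ℝ) a₂, b₂⟫
          ≤ ‖a₁ - act (R : Matrix (Fin 3) (Fin 3) ℝ) a₂‖ * ‖b₂‖ := real_inner_le_norm _ _
        _ ≤ (‖a₁‖ + ‖act (R : Matrix (Fin 3) (Fin 3) ℝ) a₂‖) * ‖b₂‖ := by
            apply mul_le_mul_of_nonneg_right (norm_sub_le _ _) (norm_nonneg _)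
        _ = 2 := by rw [ha₁, hR, hb₂]; norm_num
    linarith
  · set a : EuclideanSpace ℝ (Fin 3) := EuclideanSpace.single 0 1 with ha
    have hna : ‖a‖ = 1 := by simp [ha]
    set M : Matrix (Fin 3) (Fin 3) ℝ := !![-1,0,0;0,-1,0;0,0,1] with hM
    have hMmem : M ∈ Matrix.specialOrthogonalGroup (Fin 3) ℝ := by
      refine ⟨Matrix.mem_unitaryGroup_iff'.mpr ?_, ?_⟩
      · ext i j
        fin_cases i <;> fin_cases j <;>
          simp [hM, Matrix.mul_apply, Fin.sum_univ_succ, Matrix.one_apply]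
      · show M.det = 1
        rw [Matrix.det_fin_three]; simp [hM]
    have hact : act M a = -a := by
      ext i
      simp only [act, Matrix.toEuclideanLin_apply, WithLp.ofLp_toLp]
      fin_cases i <;>
        norm_num [hM, ha, Matrix.mulVec, dotProduct, Fin.sum_univ_three,
          EuclideanSpace.single_apply]
    refine ⟨a, a, a, a, ⟨M, hMmem⟩, hna, rfl, rfl, rfl, hact, ?_⟩
    have hself : ⟪a, a⟫ = 1 := by
      rw [real_inner_self_eq_norm_sq, hna]; norm_num
    rw [hact]
    rw [inner_add_left, sub_neg_eq_add, inner_add_left, hself]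
    norm_num
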